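/- With α(c,p,n,h) := n·c + n³h²/(2p(n−p)) − n|n−2p|·h·√(n²h²+4c·p(n−p))/(2p(n−p)), for fixed c ≥ 0, integers n ≥ 2 and 1 ≤ p ≤ n−1, the minimum over h ≥ 0 of α(c,p,n,h) equals 2c·√(p(n−p)). -/

import Mathlib

/-- The pinching function
`α(c,p,n,h) = n·c + n³h²/(2p(n−p)) − n|n−2p|·h·√(n²h² + 4c·p(n−p))/(2p(n−p))`. -/
noncomputable def pinchAlpha (c : ℝ) (p n : ℕ) (h : ℝ) : ℝ :=
  n * c + n ^ 3 * h ^ 2 / (2 * p * ((n : ℝ) - p)) -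
    n * |(n : ℝ) - 2 * p| * h * Real.sqrt (n ^ 2 * h ^ 2 + 4 * c * p * ((n : ℝ) - p)) /
      (2 * p * ((n : ℝ) - p))


set_option maxHeartbeats 1000000 in
/-- For fixed `c ≥ 0`, `n ≥ 2` and `1 ≤ p ≤ n−1`, the minimum over
`h ≥ 0` of `α(c,p,n,h)` equals `2c·√(p(n−p))`. -/
theorem pinchAlpha_min_over_h (c : ℝ) (hc : 0 ≤ c) (n p : ℕ) (hn : 2 ≤ n)
    (hp1 : 1 ≤ p) (hp2 : p ≤ n - 1) :
    (∀ h : ℝ, 0 ≤ h → 2 * c * Real.sqrt (p * ((n : ℝ) - p)) ≤ pinchAlpha c p n h) ∧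
      (∃ h : ℝ, 0 ≤ h ∧ pinchAlpha c p n h = 2 * c * Real.sqrt (p * ((n : ℝ) - p))) := by
  have hpR : (1:ℝ) ≤ (p:ℝ) := by exact_mod_cast hp1
  have hnpR : (1:ℝ) ≤ (n:ℝ) - p := by
    have h1 : p + 1 ≤ n := by omega
    have h2 : ((p:ℝ) + 1) ≤ (n:ℝ) := by exact_mod_cast h1
    linarith
  have hq : (0:ℝ) < (p:ℝ) * ((n:ℝ) - p) := by nlinarith
  set r : ℝ := Real.sqrt ((p:ℝ) * ((n:ℝ) - p)) with hrdef
  have hr0 : 0 < r := Real.sqrt_pos.mpr hq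
  have hq' : r ^ 2 = (p:ℝ) * ((n:ℝ) - p) := Real.sq_sqrt hq.le
  clear_value r
  have hm2 : |(n:ℝ) - 2 * p| ^ 2 = ((n:ℝ) - 2 * p) ^ 2 := sq_abs _
  have hm0 : 0 ≤ |(n:ℝ) - 2 * p| := abs_nonneg _
  have hn2r : 2 * r ≤ (n:ℝ) := by nlinarith [sq_nonneg ((n:ℝ) - 2 * p), Nat.cast_nonneg (α := ℝ) n]
  constructor
  · intro h hh
    set s : ℝ := Real.sqrt ((n:ℝ) ^ 2 * h ^ 2 + 4 * c * p * ((n:ℝ) - p)) with hsdef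
    have hs0 : 0 ≤ s := Real.sqrt_nonneg _
    have hs2 : s ^ 2 = (n:ℝ) ^ 2 * h ^ 2 + 4 * c * p * ((n:ℝ) - p) :=
      Real.sq_sqrt (by positivity)
    clear_value s
    set X : ℝ := (n:ℝ) ^ 3 * h ^ 2 + 2 * ((p:ℝ) * ((n:ℝ) - p)) * c * ((n:ℝ) - 2 * r) with hXdef
    set Y : ℝ := (n:ℝ) * |(n:ℝ) - 2 * p| * h * s with hYdef
    have hX0 : 0 ≤ X := by
      have h1 : (0:ℝ) ≤ (n:ℝ) ^ 3 * h ^ 2 := by positivity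
      have h2 : (0:ℝ) ≤ 2 * ((p:ℝ) * ((n:ℝ) - p)) * c * ((n:ℝ) - 2 * r) :=
        mul_nonneg (mul_nonneg (by positivity) hc) (by linarith)
      rw [hXdef]; linarith
    have hY0 : 0 ≤ Y := by
      rw [hYdef]
      have : (0:ℝ) ≤ (n:ℝ) := by positivity
      exact mul_nonneg (mul_nonneg (mul_nonneg this hm0) hh) hs0
    clear_value X Y
    have hY2 : Y ^ 2 = (n:ℝ)^2 * ((n:ℝ) - 2 * p)^2 * h^2 *
        ((n:ℝ) ^ 2 * h ^ 2 + 4 * c * p * ((n:ℝ) - p)) := by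
      rw [hYdef]; rw [mul_pow, mul_pow, mul_pow, hm2, hs2]
    have key : Y ^ 2 ≤ X ^ 2 := by
      have hid : X ^ 2 - Y ^ 2 =
          4 * r ^ 2 * ((n:ℝ) ^ 2 * h ^ 2 - c * r * ((n:ℝ) - 2 * r)) ^ 2 := by
        rw [hY2, hXdef]
        linear_combination (-16*c^2*r^4 + 16*(p:ℝ)^2*c^2*r^2 + 16*(n:ℝ)*c^2*r^3 - 16*(n:ℝ)*(p:ℝ)*c^2*r^2 - 16*(n:ℝ)*(p:ℝ)^2*c^2*r - 4*(n:ℝ)^2*c^2*r^2 - 16*(n:ℝ)^2*h^2*c*r^2 + 16*(n:ℝ)^2*(p:ℝ)*c^2*r + 4*(n:ℝ)^2*(p:ℝ)^2*c^2 + 16*(n:ℝ)^2*(p:ℝ)^2*h^2*c + 8*(n:ℝ)^3*h^2*c*r - 4*(n:ℝ)^3*(p:ℝ)*c^2 - 16*(n:ℝ)^3*(p:ℝ)*h^2*c - 4*(n:ℝ)^4*h^4) * hq'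
      nlinarith [sq_nonneg ((n:ℝ) ^ 2 * h ^ 2 - c * r * ((n:ℝ) - 2 * r)), sq_nonneg r]
    have hYX : Y ≤ X := by nlinarith
    have heq : pinchAlpha c p n h = 2 * c * r + (X - Y) / (2 * ((p:ℝ) * ((n:ℝ) - p))) := by
      rw [pinchAlpha, ← hsdef, hXdef, hYdef]
      field_simp
      ring
    rw [heq]
    have : 0 ≤ (X - Y) / (2 * ((p:ℝ) * ((n:ℝ) - p))) := by
      apply div_nonneg (by linarith) (by linarith)
    linarith
  · refine ⟨Real.sqrt (c * r * ((n:ℝ) - 2 * r)) / n, by positivity, ?_⟩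
    set h₀ : ℝ := Real.sqrt (c * r * ((n:ℝ) - 2 * r)) / n with h0def
    clear_value h₀
    have hnn : (0:ℝ) < (n:ℝ) := by positivity
    have harg : 0 ≤ c * r * ((n:ℝ) - 2 * r) :=
      mul_nonneg (mul_nonneg hc hr0.le) (by linarith)
    have h0sq : h₀ ^ 2 = c * r * ((n:ℝ) - 2 * r) / (n:ℝ) ^ 2 := by
      rw [h0def, div_pow, Real.sq_sqrt harg]
    have hsarg : (n:ℝ) ^ 2 * h₀ ^ 2 + 4 * c * (p:ℝ) * ((n:ℝ) - (p:ℝ)) =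
        c * r * ((n:ℝ) + 2 * r) := by
      rw [h0sq]
      have hmm : (n:ℝ)^2 * (c * r * ((n:ℝ) - 2 * r) / (n:ℝ)^2) = c * r * ((n:ℝ) - 2 * r) := by
        field_simp
      linear_combination hmm - 4 * c * hq'
    set S : ℝ := Real.sqrt ((n:ℝ) ^ 2 * h₀ ^ 2 + 4 * c * (p:ℝ) * ((n:ℝ) - (p:ℝ))) with hSdef
    clear_value S
    have hprod : Real.sqrt (c * r * ((n:ℝ) - 2 * r)) * S = c * r * |(n:ℝ) - 2 * p| := by
      rw [hSdef, hsarg, ← Real.sqrt_mul harg]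
      have hsq : c * r * ((n:ℝ) - 2 * r) * (c * r * ((n:ℝ) + 2 * r)) =
          (c * r * |(n:ℝ) - 2 * p|) ^ 2 := by
        rw [mul_pow, mul_pow, hm2]
        linear_combination (-4*c^2*r^2) * hq'
      rw [hsq, Real.sqrt_sq (by positivity)]
    have e1 : (n:ℝ) * |(n:ℝ) - 2 * p| * h₀ * S = c * r * |(n:ℝ) - 2 * p| ^ 2 := by
      have : (n:ℝ) * |(n:ℝ) - 2 * p| * h₀ * S
          = |(n:ℝ) - 2 * p| * (Real.sqrt (c * r * ((n:ℝ) - 2 * r)) * S) := by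
        rw [h0def]; field_simp
      rw [this, hprod]; ring
    have hfin : pinchAlpha c p n h₀ = 2 * c * r := by
      rw [pinchAlpha, ← hSdef, e1, h0sq, hm2]
      have hd : (2:ℝ) * (p:ℝ) * ((n:ℝ) - (p:ℝ)) = 2 * r ^ 2 := by rw [hq']; ring
      have hsq2 : ((n:ℝ) - 2 * (p:ℝ)) ^ 2 = (n:ℝ) ^ 2 - 4 * r ^ 2 := by rw [hq']; ring
      rw [hd, hsq2]
      field_simp
      ring
    rw [hfin]
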